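/- arXiv:2412.20094 — 3 statements merged into one kernel-verified Lean document; each statement's English description precedes it below -/
import Mathlib

section
/- Let H₋₁, H₀, H₁, H₂ be Hilbert spaces. (a) If (T_n)_{n∈ℕ} is a sequence of continuous linear operators from H₁ to H₂ converging strongly to a continuous linear operator T, and 𝒦 is a collectively compact family of continuous linear operators from H₀ to H₁, then the family {T_n ∘ K : n ∈ ℕ, K ∈ 𝒦} is collectively compact as a family of operators from H₀ to H₂. (b) If (S_n)_{n∈ℕ} is a sequence of continuous linear operators from H₋₁ to H₀ converging strongly to a continuous linear operator S, then the family {K ∘ S_n : n ∈ ℕ, K ∈ 𝒦} is collectively compact as a family of operators from H₋₁ to H₁. -/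
open Filter

/-- A set is totally bounded if for every `ε > 0` it is within distance `ε` of some
totally bounded set. -/
lemma totallyBounded_of_approx {α : Type*} [PseudoMetricSpace α] {s : Set α}
    (h : ∀ ε > (0 : ℝ), ∃ t : Set α, TotallyBounded t ∧ ∀ x ∈ s, ∃ y ∈ t, dist x y ≤ ε) :
    TotallyBounded s := by
  rw [Metric.totallyBounded_iff]
  intro ε hε
  obtain ⟨t, ht, happ⟩ := h (ε / 3) (by positivity)
  obtain ⟨u, hu, htu⟩ := Metric.totallyBounded_iff.mp ht (ε / 3) (by positivity)
  refine ⟨u, hu, fun x hx => ?_⟩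
  obtain ⟨y, hy, hxy⟩ := happ x hx
  obtain ⟨z, hz, hyz⟩ := Set.mem_iUnion₂.mp (htu hy)
  refine Set.mem_iUnion₂.mpr ⟨z, hz, ?_⟩
  have : dist x z ≤ dist x y + dist y z := dist_triangle x y z
  have hyz' : dist y z < ε / 3 := Metric.mem_ball.mp hyz
  simp only [Metric.mem_ball]
  linarith

/-- Composing a collectively compact family `𝒦` with a strongly convergent sequence of
operators (either on the left or on the right) yields a collectively compact family. -/
theorem comp_collectively_compact
    {Hm1 H₀ H₁ H₂ : Type*}
    [NormedAddCommGroup Hm1] [InnerProductSpace ℂ Hm1] [CompleteSpace Hm1]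
    [NormedAddCommGroup H₀] [InnerProductSpace ℂ H₀] [CompleteSpace H₀]
    [NormedAddCommGroup H₁] [InnerProductSpace ℂ H₁] [CompleteSpace H₁]
    [NormedAddCommGroup H₂] [InnerProductSpace ℂ H₂] [CompleteSpace H₂]
    (𝒦 : Set (H₀ →L[ℂ] H₁))
    (hcc : TotallyBounded {y : H₁ | ∃ K ∈ 𝒦, ∃ x : H₀, ‖x‖ ≤ 1 ∧ y = K x})
    (T : ℕ → H₁ →L[ℂ] H₂) (T₀ : H₁ →L[ℂ] H₂)
    (hT : ∀ x : H₁, Tendsto (fun n => ‖T n x - T₀ x‖) atTop (nhds 0))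
    (S : ℕ → Hm1 →L[ℂ] H₀) (S₀ : Hm1 →L[ℂ] H₀)
    (hS : ∀ x : Hm1, Tendsto (fun n => ‖S n x - S₀ x‖) atTop (nhds 0)) :
    TotallyBounded {y : H₂ | ∃ n : ℕ, ∃ K ∈ 𝒦, ∃ x : H₀, ‖x‖ ≤ 1 ∧ y = T n (K x)} ∧
    TotallyBounded {y : H₁ | ∃ n : ℕ, ∃ K ∈ 𝒦, ∃ x : Hm1, ‖x‖ ≤ 1 ∧ y = K (S n x)} := by
  set A : Set H₁ := {y : H₁ | ∃ K ∈ 𝒦, ∃ x : H₀, ‖x‖ ≤ 1 ∧ y = K x} with hA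
  -- uniform bound on the `T n`
  have hTb : ∀ x : H₁, ∃ C, ∀ n, ‖T n x‖ ≤ C := by
    intro x
    obtain ⟨C, hC⟩ := (hT x).bddAbove_range
    refine ⟨C + ‖T₀ x‖, fun n => ?_⟩
    have h1 : ‖T n x - T₀ x‖ ≤ C := hC (Set.mem_range_self n)
    calc ‖T n x‖ = ‖(T n x - T₀ x) + T₀ x‖ := by rw [sub_add_cancel]
      _ ≤ ‖T n x - T₀ x‖ + ‖T₀ x‖ := norm_add_le _ _
      _ ≤ C + ‖T₀ x‖ := by linarith
  obtain ⟨C, hC⟩ := banach_steinhaus hTb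
  have hC0 : 0 ≤ C := le_trans (norm_nonneg _) (hC 0)
  -- uniform bound on the `S n`
  have hSb : ∀ x : Hm1, ∃ C, ∀ n, ‖S n x‖ ≤ C := by
    intro x
    obtain ⟨C, hC⟩ := (hS x).bddAbove_range
    refine ⟨C + ‖S₀ x‖, fun n => ?_⟩
    have h1 : ‖S n x - S₀ x‖ ≤ C := hC (Set.mem_range_self n)
    calc ‖S n x‖ = ‖(S n x - S₀ x) + S₀ x‖ := by rw [sub_add_cancel]
      _ ≤ ‖S n x - S₀ x‖ + ‖S₀ x‖ := norm_add_le _ _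
      _ ≤ C + ‖S₀ x‖ := by linarith
  obtain ⟨M, hM⟩ := banach_steinhaus hSb
  have hM0 : 0 ≤ M := le_trans (norm_nonneg _) (hM 0)
  constructor
  · -- part (a)
    apply totallyBounded_of_approx
    intro ε hε
    set δ : ℝ := ε / (2 * (C + 1)) with hδdef
    have hδ : 0 < δ := by positivity
    obtain ⟨net, hnetfin, hnet⟩ := Metric.totallyBounded_iff.mp hcc δ hδ
    have hev : ∀ᶠ n in atTop, ∀ y ∈ net, ‖T n y - T₀ y‖ ≤ ε / 2 := by
      rw [eventually_all_finite hnetfin]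
      intro y _
      have := (hT y).eventually_le_const (by positivity : (0:ℝ) < ε / 2)
      exact this
    obtain ⟨N, hN⟩ := eventually_atTop.mp hev
    refine ⟨(⋃ n ∈ Finset.range N, (T n) '' A) ∪ (T₀ '' net), ?_, ?_⟩
    · apply TotallyBounded.union
      · refine (totallyBounded_biUnion (Finset.range N).finite_toSet).mpr fun n _ => ?_
        exact hcc.image (T n).uniformContinuous
      · exact (hnetfin.image T₀).totallyBounded
    · rintro z ⟨n, K, hK, x, hx, rfl⟩
      by_cases hn : n < N
      · refine ⟨T n (K x), Or.inl ?_, by simpa using hε.le⟩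
        exact Set.mem_biUnion (Finset.mem_coe.mpr (Finset.mem_range.mpr hn))
          ⟨K x, ⟨K, hK, x, hx, rfl⟩, rfl⟩
      · push_neg at hn
        have hKxA : K x ∈ A := ⟨K, hK, x, hx, rfl⟩
        obtain ⟨y, hy, hxy⟩ := Set.mem_iUnion₂.mp (hnet hKxA)
        have hxy' : ‖K x - y‖ < δ := by
          rw [← dist_eq_norm]; exact Metric.mem_ball.mp hxy
        refine ⟨T₀ y, Or.inr ⟨y, hy, rfl⟩, ?_⟩
        have h1 : ‖T n (K x) - T n y‖ ≤ C * δ := by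
          calc ‖T n (K x) - T n y‖ = ‖T n (K x - y)‖ := by rw [map_sub]
            _ ≤ ‖T n‖ * ‖K x - y‖ := (T n).le_opNorm _
            _ ≤ C * δ := by
                apply mul_le_mul (hC n) hxy'.le (norm_nonneg _) hC0
        have h2 : ‖T n y - T₀ y‖ ≤ ε / 2 := hN n hn y hy
        have hC1 : (0:ℝ) < C + 1 := by linarith
        have h3 : C * δ ≤ ε / 2 := by
          calc C * δ ≤ (C + 1) * δ := by nlinarith
            _ = ε / 2 := by rw [hδdef]; field_simp
        calc dist (T n (K x)) (T₀ y) = ‖(T n (K x) - T n y) + (T n y - T₀ y)‖ := by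
              rw [dist_eq_norm]; congr 1; abel
          _ ≤ ‖T n (K x) - T n y‖ + ‖T n y - T₀ y‖ := norm_add_le _ _
          _ ≤ ε := by linarith
  · -- part (b)
    set c : ℝ := M + 1 with hcdef
    have hc : (0:ℝ) < c := by linarith
    have hcne : (c : ℂ) ≠ 0 := by
      simp only [ne_eq, Complex.ofReal_eq_zero]; linarith
    set L : H₁ →L[ℂ] H₁ := (c : ℂ) • ContinuousLinearMap.id ℂ H₁ with hL
    have himg : TotallyBounded (L '' A) := hcc.image L.uniformContinuous
    refine himg.subset ?_
    rintro z ⟨n, K, hK, x, hx, rfl⟩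
    have hSn : ‖S n x‖ ≤ M := by
      calc ‖S n x‖ ≤ ‖S n‖ * ‖x‖ := (S n).le_opNorm x
        _ ≤ M * 1 := mul_le_mul (hM n) hx (norm_nonneg _) hM0
        _ = M := mul_one M
    set w : H₀ := (c : ℂ)⁻¹ • S n x with hw
    have hwn : ‖w‖ ≤ 1 := by
      rw [hw, norm_smul, norm_inv, Complex.norm_real, Real.norm_eq_abs,
        abs_of_pos hc]
      rw [inv_mul_le_iff₀ hc, mul_one]
      linarith
    refine ⟨K w, ⟨K, hK, w, hwn, rfl⟩, ?_⟩
    simp only [hL, hw, ContinuousLinearMap.smul_apply, ContinuousLinearMap.id_apply,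
      map_smul, smul_smul, inv_mul_cancel₀ hcne, one_smul]
end

section
/- Let H₀ and H₁ be complex Hilbert spaces and let (T_n)_{n∈ℕ} be a sequence of compact continuous linear operators from H₀ to H₁ such that: (i) the family {T_n : n ∈ ℕ} is collectively compact; (ii) T_n converges strongly to a continuous linear operator T₀ : H₀ → H₁; and (iii) whenever a sequence (u_n) in H₀ converges weakly to some u ∈ H₀, there exists a subsequence (u_{n_k}) such that ‖T_{n_k} u_{n_k} − T₀ u‖ → 0. Then the sequence (T_n* ∘ T_n) inherits the same continuity property: whenever a sequence (v_n) in H₀ converges weakly to some v₀ ∈ H₀, there exists a subsequence (v_{n_k}) such that ‖T_{n_k}* T_{n_k} v_{n_k} − T₀* T₀ v₀‖ → 0. -/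
set_option maxHeartbeats 1000000


open Filter ContinuousLinearMap

/-- If `(Tₙ)` is a collectively compact sequence of compact operators between complex
Hilbert spaces converging strongly to `T₀` and mapping weakly convergent sequences to
(subsequentially) norm convergent sequences, then `(Tₙ* ∘ Tₙ)` inherits the same
continuity property with limit operator `T₀* ∘ T₀`. -/
theorem adjoint_comp_inherits_continuity
    {H₀ H₁ : Type*} [NormedAddCommGroup H₀] [InnerProductSpace ℂ H₀] [CompleteSpace H₀]
    [NormedAddCommGroup H₁] [InnerProductSpace ℂ H₁] [CompleteSpace H₁]
    (T : ℕ → H₀ →L[ℂ] H₁) (T₀ : H₀ →L[ℂ] H₁)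
    (hcomp : ∀ n, IsCompactOperator (T n))
    (hcc : TotallyBounded {y : H₁ | ∃ n : ℕ, ∃ x : H₀, ‖x‖ ≤ 1 ∧ y = T n x})
    (hstrong : ∀ x : H₀, Tendsto (fun n => ‖T n x - T₀ x‖) atTop (nhds 0))
    (hweak : ∀ (u : ℕ → H₀) (u₀ : H₀),
      (∀ y : H₀, Tendsto (fun n => (inner ℂ (u n) y : ℂ)) atTop (nhds (inner ℂ u₀ y))) →
      ∃ φ : ℕ → ℕ, StrictMono φ ∧
        Tendsto (fun k => ‖T (φ k) (u (φ k)) - T₀ u₀‖) atTop (nhds 0)) :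
    ∀ (v : ℕ → H₀) (v₀ : H₀),
      (∀ y : H₀, Tendsto (fun n => (inner ℂ (v n) y : ℂ)) atTop (nhds (inner ℂ v₀ y))) →
      ∃ φ : ℕ → ℕ, StrictMono φ ∧
        Tendsto (fun k => ‖adjoint (T (φ k)) (T (φ k) (v (φ k))) - adjoint T₀ (T₀ v₀)‖)
          atTop (nhds 0) := by
  intro v v₀ hv
  set y : H₁ := T₀ v₀ with hy
  set g : ℕ → H₀ := fun n => adjoint (T n) y - adjoint T₀ y with hg
  set b : ℕ → ℝ := fun n => ‖g n‖ with hb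
  -- uniform bound on the operator norms
  obtain ⟨C, hC⟩ : ∃ C, ∀ n, ‖T n‖ ≤ C := by
    apply banach_steinhaus
    intro x
    obtain ⟨c, hc⟩ := (hstrong x).bddAbove_range
    refine ⟨c + ‖T₀ x‖, fun n => ?_⟩
    have h1 : ‖T n x - T₀ x‖ ≤ c := hc (Set.mem_range_self n)
    calc ‖T n x‖ ≤ ‖T n x - T₀ x‖ + ‖T₀ x‖ := by
          simpa using norm_add_le (T n x - T₀ x) (T₀ x)
      _ ≤ c + ‖T₀ x‖ := by linarith
  have hC0 : 0 ≤ C := (norm_nonneg (T 0)).trans (hC 0)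
  -- uniform bound on ‖v n‖
  obtain ⟨V, hV⟩ : ∃ V, ∀ n, ‖v n‖ ≤ V := by
    have := banach_steinhaus (g := fun n => innerSL ℂ (v n)) (fun h => by
      obtain ⟨c, hc⟩ := ((hv h).norm.bddAbove_range)
      exact ⟨c, fun n => by simpa using hc (Set.mem_range_self n)⟩)
    obtain ⟨V, hVn⟩ := this
    exact ⟨V, fun n => by simpa [innerSL_apply_norm] using hVn n⟩
  have hV0 : 0 ≤ V := (norm_nonneg (v 0)).trans (hV 0)
  -- bound on b n
  have hadj_norm : ∀ (A : H₀ →L[ℂ] H₁), ‖adjoint A‖ = ‖A‖ := fun A =>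
    (ContinuousLinearMap.adjoint : (H₀ →L[ℂ] H₁) ≃ₗᵢ⋆[ℂ] (H₁ →L[ℂ] H₀)).norm_map A
  have hgB : ∀ n, b n ≤ (C + ‖T₀‖) * ‖y‖ := by
    intro n
    have h1 : ‖adjoint (T n) y‖ ≤ C * ‖y‖ := by
      calc ‖adjoint (T n) y‖ ≤ ‖adjoint (T n)‖ * ‖y‖ := (adjoint (T n)).le_opNorm y
        _ ≤ C * ‖y‖ := by
            rw [hadj_norm]
            exact mul_le_mul_of_nonneg_right (hC n) (norm_nonneg y)
    have h2 : ‖adjoint T₀ y‖ ≤ ‖T₀‖ * ‖y‖ := by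
      calc ‖adjoint T₀ y‖ ≤ ‖adjoint T₀‖ * ‖y‖ := (adjoint T₀).le_opNorm y
        _ = ‖T₀‖ * ‖y‖ := by rw [hadj_norm]
    calc b n ≤ ‖adjoint (T n) y‖ + ‖adjoint T₀ y‖ := norm_sub_le _ _
      _ ≤ C * ‖y‖ + ‖T₀‖ * ‖y‖ := add_le_add h1 h2
      _ = (C + ‖T₀‖) * ‖y‖ := by ring
  set M : ℝ := ((C + ‖T₀‖) * ‖y‖) * V with hM
  have hM0 : 0 ≤ M := by positivity
  have hMv : ∀ n, ‖(inner ℂ (g n) (v n) : ℂ)‖ ≤ M := by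
    intro n
    calc ‖(inner ℂ (g n) (v n) : ℂ)‖ ≤ ‖g n‖ * ‖v n‖ := norm_inner_le_norm _ _
      _ ≤ ((C + ‖T₀‖) * ‖y‖) * V :=
        mul_le_mul (hgB n) (hV n) (norm_nonneg _) (by positivity)
  -- key pairing identity
  have hgh : ∀ n (h : H₀), (inner ℂ (g n) h : ℂ) = inner ℂ y (T n h) - inner ℂ y (T₀ h) := by
    intro n h
    simp [hg, inner_sub_left, adjoint_inner_left]
  have hgh_bound : ∀ n (h : H₀), ‖(inner ℂ (g n) h : ℂ)‖ ≤ ‖y‖ * ‖T n h - T₀ h‖ := by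
    intro n h
    rw [hgh]
    calc ‖(inner ℂ y (T n h) : ℂ) - inner ℂ y (T₀ h)‖ = ‖(inner ℂ y (T n h - T₀ h) : ℂ)‖ := by
          rw [inner_sub_right]
      _ ≤ ‖y‖ * ‖T n h - T₀ h‖ := norm_inner_le_norm _ _
  -- THE KEY CLAIM
  have key : ∀ ε : ℝ, 0 < ε → ∃ᶠ n in atTop, ‖T n (v n) - y‖ ≤ ε ∧ b n ≤ ε := by
    intro ε hε
    by_contra hcon
    rw [not_frequently] at hcon
    obtain ⟨N, hN⟩ := eventually_atTop.mp hcon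
    set t : ℝ := (M + 1) / ε with ht
    have ht0 : 0 < t := div_pos (by linarith) hε
    set u : ℕ → H₀ := fun n =>
      if ε < b n then v n + (((t / b n : ℝ) : ℂ)) • g n else v n with hu
    -- difference bound for weak convergence of u
    have hu_sub : ∀ n (h : H₀),
        ‖(inner ℂ (u n) h : ℂ) - inner ℂ (v n) h‖ ≤ (t / ε) * (‖y‖ * ‖T n h - T₀ h‖) := by
      intro n h
      by_cases hw : ε < b n
      · have hbn : (0 : ℝ) < b n := hε.trans hw
        have : (inner ℂ (u n) h : ℂ) - inner ℂ (v n) h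
            = ((t / b n : ℝ) : ℂ) * inner ℂ (g n) h := by
          simp [hu, if_pos hw, inner_add_left, inner_smul_left, Complex.conj_ofReal]
          ring
        rw [this, norm_mul]
        have h1 : ‖((t / b n : ℝ) : ℂ)‖ = t / b n := by
          rw [Complex.norm_real, Real.norm_eq_abs, abs_of_nonneg (by positivity)]
        rw [h1]
        have h2 : t / b n ≤ t / ε := by
          apply div_le_div_of_nonneg_left ht0.le hε hw.le
        exact mul_le_mul h2 (hgh_bound n h) (norm_nonneg _) (by positivity)
      · simp only [hu, if_neg hw]
        simp only [sub_self, norm_zero]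
        positivity
    have hu_weak : ∀ h : H₀,
        Tendsto (fun n => (inner ℂ (u n) h : ℂ)) atTop (nhds (inner ℂ v₀ h)) := by
      intro h
      have hlim : Tendsto (fun n => (t / ε) * (‖y‖ * ‖T n h - T₀ h‖)) atTop (nhds 0) := by
        have := ((hstrong h).const_mul ‖y‖).const_mul (t / ε)
        simpa using this
      have h1 : Tendsto (fun n => (inner ℂ (u n) h : ℂ) - inner ℂ (v n) h) atTop (nhds 0) :=
        squeeze_zero_norm (fun n => hu_sub n h) hlim
      have := h1.add (hv h)
      simpa using this
    obtain ⟨ρ, hρm, hρ⟩ := hweak u v₀ hu_weak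
    -- arming: inside W the pairing is at least 1
    have harm : ∀ n, ε < b n → (1 : ℝ) ≤ ‖(inner ℂ (g n) (u n) : ℂ)‖ := by
      intro n hw
      have hbn : (0 : ℝ) < b n := hε.trans hw
      have hiden : (inner ℂ (g n) (u n) : ℂ) = inner ℂ (g n) (v n) + ((t * b n : ℝ) : ℂ) := by
        simp only [hu, if_pos hw, inner_add_right, inner_smul_right]
        congr 1
        rw [inner_self_eq_norm_sq_to_K]
        have hbg : ‖g n‖ = b n := rfl
        have hbc : ((b n : ℝ) : ℂ) ≠ 0 := by exact_mod_cast hbn.ne'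
        rw [hbg]
        push_cast
        field_simp
        ring
        rfl
      rw [hiden]
      have h2 : M + 1 ≤ t * b n := by
        have h3 : t * ε = M + 1 := by rw [ht, div_mul_cancel₀ _ hε.ne']
        nlinarith
      have h4 : ‖((t * b n : ℝ) : ℂ)‖ = t * b n := by
        rw [Complex.norm_real, Real.norm_eq_abs, abs_of_nonneg (by positivity)]
      have h5 : ‖((t * b n : ℝ) : ℂ)‖ - ‖(inner ℂ (g n) (v n) : ℂ)‖
          ≤ ‖(inner ℂ (g n) (v n) : ℂ) + ((t * b n : ℝ) : ℂ)‖ := by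
        have := norm_sub_norm_le (((t * b n : ℝ) : ℂ)) (-(inner ℂ (g n) (v n) : ℂ))
        simpa [add_comm, sub_neg_eq_add] using this
      have h6 := hMv n
      rw [h4] at h5
      linarith
    -- decay of the pairing along ρ
    have hBall : Tendsto
        (fun n => (inner ℂ y (T₀ v₀) : ℂ) - inner ℂ y (T₀ (u n))) atTop (nhds 0) := by
      have hconj : Tendsto (fun n => (inner ℂ (adjoint T₀ y) (u n) : ℂ)) atTop
          (nhds (inner ℂ (adjoint T₀ y) v₀)) := by
        have h1 := hu_weak (adjoint T₀ y)
        have h2 := ((Complex.continuous_conj).tendsto _).comp h1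
        simpa [Function.comp_def, inner_conj_symm] using h2
      have h3 : Tendsto (fun n => (inner ℂ (adjoint T₀ y) v₀ : ℂ)
          - inner ℂ (adjoint T₀ y) (u n)) atTop (nhds 0) := by
        simpa using (tendsto_const_nhds (x := (inner ℂ (adjoint T₀ y) v₀ : ℂ))).sub hconj
      simpa [adjoint_inner_left] using h3
    have hA : Tendsto (fun k => (inner ℂ y (T (ρ k) (u (ρ k)) - y) : ℂ)) atTop (nhds 0) := by
      have hb1 : ∀ k, ‖(inner ℂ y (T (ρ k) (u (ρ k)) - y) : ℂ)‖
          ≤ ‖y‖ * ‖T (ρ k) (u (ρ k)) - T₀ v₀‖ := by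
        intro k
        exact norm_inner_le_norm (𝕜 := ℂ) y (T (ρ k) (u (ρ k)) - y)
      exact squeeze_zero_norm hb1 (by simpa using hρ.const_mul ‖y‖)
    have hdecay : Tendsto (fun k => (inner ℂ (g (ρ k)) (u (ρ k)) : ℂ)) atTop (nhds 0) := by
      have hid : ∀ k, (inner ℂ (g (ρ k)) (u (ρ k)) : ℂ)
          = (inner ℂ y (T (ρ k) (u (ρ k)) - y) : ℂ)
            + ((inner ℂ y (T₀ v₀) : ℂ) - inner ℂ y (T₀ (u (ρ k)))) := by
        intro k
        rw [hgh, inner_sub_right]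
        rw [hy]
        ring
      have := hA.add (hBall.comp hρm.tendsto_atTop)
      simp only [add_zero] at this
      exact this.congr (fun k => (hid k).symm)
    -- derive the contradiction
    have hdn : Tendsto (fun k => ‖(inner ℂ (g (ρ k)) (u (ρ k)) : ℂ)‖) atTop (nhds 0) := by
      simpa using hdecay.norm
    have hev1 : ∀ᶠ k in atTop, ‖(inner ℂ (g (ρ k)) (u (ρ k)) : ℂ)‖ < 1 :=
      hdn.eventually_lt_const one_pos
    have hev2 : ∀ᶠ k in atTop, ‖T (ρ k) (u (ρ k)) - T₀ v₀‖ < ε :=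
      hρ.eventually_lt_const hε
    have hev3 : ∀ᶠ k in atTop, N ≤ ρ k := hρm.tendsto_atTop.eventually_ge_atTop N
    obtain ⟨k, h1, h2, h3⟩ := (hev1.and (hev2.and hev3)).exists
    have hnW : ¬ ε < b (ρ k) := fun hw => absurd (harm _ hw) (not_le.mpr h1)
    have huv : u (ρ k) = v (ρ k) := by simp [hu, if_neg hnW]
    refine hN (ρ k) h3 ⟨?_, not_lt.mp hnW⟩
    rw [← huv]
    exact le_of_lt (by simpa [hy] using h2)
  -- extraction of the diagonal subsequence
  have key' : ∀ m : ℕ, ∃ᶠ n in atTop,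
      ‖T n (v n) - y‖ ≤ 1 / ((m : ℝ) + 1) ∧ b n ≤ 1 / ((m : ℝ) + 1) :=
    fun m => key _ (by positivity)
  obtain ⟨φ, hφm, hφ⟩ := extraction_forall_of_frequently key'
  refine ⟨φ, hφm, ?_⟩
  have hbound : ∀ k, ‖adjoint (T (φ k)) (T (φ k) (v (φ k))) - adjoint T₀ (T₀ v₀)‖
      ≤ (C + 1) * (1 / ((k : ℝ) + 1)) := by
    intro k
    have e : adjoint (T (φ k)) (T (φ k) (v (φ k))) - adjoint T₀ (T₀ v₀)
        = adjoint (T (φ k)) (T (φ k) (v (φ k)) - y) + g (φ k) := by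
      simp only [hg, map_sub, ← hy]
      abel
    rw [e]
    have h1 : ‖adjoint (T (φ k)) (T (φ k) (v (φ k)) - y)‖
        ≤ C * ‖T (φ k) (v (φ k)) - y‖ := by
      calc ‖adjoint (T (φ k)) (T (φ k) (v (φ k)) - y)‖
          ≤ ‖adjoint (T (φ k))‖ * ‖T (φ k) (v (φ k)) - y‖ := (adjoint (T (φ k))).le_opNorm _
        _ ≤ C * ‖T (φ k) (v (φ k)) - y‖ := by
            rw [hadj_norm]
            exact mul_le_mul_of_nonneg_right (hC _) (norm_nonneg _)
    calc ‖adjoint (T (φ k)) (T (φ k) (v (φ k)) - y) + g (φ k)‖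
        ≤ ‖adjoint (T (φ k)) (T (φ k) (v (φ k)) - y)‖ + b (φ k) := norm_add_le _ _
      _ ≤ C * ‖T (φ k) (v (φ k)) - y‖ + b (φ k) := add_le_add h1 le_rfl
      _ ≤ C * (1 / ((k : ℝ) + 1)) + 1 / ((k : ℝ) + 1) := by
          refine add_le_add ?_ (hφ k).2
          exact mul_le_mul_of_nonneg_left (hφ k).1 hC0
      _ = (C + 1) * (1 / ((k : ℝ) + 1)) := by ring
  have hlim : Tendsto (fun k : ℕ => (C + 1) * (1 / ((k : ℝ) + 1))) atTop (nhds 0) := by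
    have := tendsto_one_div_add_atTop_nhds_zero_nat.const_mul (C + 1)
    simpa using this
  exact squeeze_zero (fun k => norm_nonneg _) hbound hlim
end

section
/- Let H₀ and H₁ be complex Hilbert spaces, let E : H₀ → H₁, B₁ : H₁ → H₁, B₀ : H₀ → H₀, P¹ : H₁ → H₁, P⁰ : H₀ → H₀ be continuous linear operators, let λ₁, λ₀ ∈ ℂ with λ₀ ≠ 0, and let c ≥ 0. Assume: (i) P¹ ∘ E = λ₁ • (B₁ ∘ P¹ ∘ E); (ii) B₀ ∘ P⁰ = λ₀⁻¹ • P⁰; (iii) ‖P¹ ∘ E − E ∘ P⁰‖ ≤ c; (iv) ‖B₁ ∘ E − E ∘ B₀‖ ≤ c; (v) ‖P⁰‖ ≤ 1; and (vi) E ∘ P⁰ ≠ 0. Then |λ₁ − λ₀| ≤ c · |λ₀| · (1 + |λ₁| + |λ₁| · ‖B₁‖) / ‖E ∘ P⁰‖. -/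
open ContinuousLinearMap

set_option maxHeartbeats 1000000 in
/-- Eigenvalue rate-of-convergence estimate: if `P¹ ∘ E = μ₁ • (B₁ ∘ P¹ ∘ E)`,
`B₀ ∘ P⁰ = μ₀⁻¹ • P⁰`, the projections and resolvents are `c`-close after intertwining
with `E`, `‖P⁰‖ ≤ 1` and `E ∘ P⁰ ≠ 0`, then
`|μ₁ − μ₀| ≤ c |μ₀| (1 + |μ₁| + |μ₁| ‖B₁‖) / ‖E ∘ P⁰‖`. -/
theorem eigenvalue_rate_estimate
    {H₀ H₁ : Type*} [NormedAddCommGroup H₀] [InnerProductSpace ℂ H₀] [CompleteSpace H₀]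
    [NormedAddCommGroup H₁] [InnerProductSpace ℂ H₁] [CompleteSpace H₁]
    (E : H₀ →L[ℂ] H₁) (B₁ : H₁ →L[ℂ] H₁) (B₀ : H₀ →L[ℂ] H₀)
    (P₁ : H₁ →L[ℂ] H₁) (P₀ : H₀ →L[ℂ] H₀) (μ₁ μ₀ : ℂ) (hμ₀ : μ₀ ≠ 0)
    (c : ℝ) (hc : 0 ≤ c)
    (h₁ : P₁ ∘L E = μ₁ • (B₁ ∘L P₁ ∘L E))
    (h₀ : B₀ ∘L P₀ = μ₀⁻¹ • P₀)
    (hproj : ‖P₁ ∘L E - E ∘L P₀‖ ≤ c)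
    (hres : ‖B₁ ∘L E - E ∘L B₀‖ ≤ c)
    (hP₀ : ‖P₀‖ ≤ 1)
    (hEP₀ : E ∘L P₀ ≠ 0) :
    ‖μ₁ - μ₀‖ ≤ c * ‖μ₀‖ * (1 + ‖μ₁‖ + ‖μ₁‖ * ‖B₁‖) / ‖E ∘L P₀‖ := by
  have hEP : (0:ℝ) < ‖E ∘L P₀‖ := norm_pos_iff.mpr hEP₀
  set D := P₁ ∘L E - E ∘L P₀ with hD
  set R := B₁ ∘L E - E ∘L B₀ with hR
  have key : (μ₀ - μ₁) • (E ∘L P₀)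
      = μ₀ • (μ₁ • (R ∘L P₀) + μ₁ • (B₁ ∘L D) - D) := by
    ext x
    have h1x : P₁ (E x) = μ₁ • B₁ (P₁ (E x)) := by
      have := congrFun (congrArg DFunLike.coe h₁) x
      simpa using this
    have h0x : E (B₀ (P₀ x)) = μ₀⁻¹ • E (P₀ x) := by
      have := congrArg E (congrFun (congrArg DFunLike.coe h₀) x)
      simpa [map_smul] using this
    simp only [hD, hR, coe_smul', Pi.smul_apply, sub_apply, add_apply, coe_comp',
      Function.comp_apply, map_sub]
    linear_combination (norm := (match_scalars <;> field_simp) <;> ring) (μ₀ * μ₁) • h0x + μ₀ • h1x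
  have hDn : ‖D‖ ≤ c := hproj
  have hRn : ‖R‖ ≤ c := hres
  have hRP : ‖R ∘L P₀‖ ≤ c := by
    calc ‖R ∘L P₀‖ ≤ ‖R‖ * ‖P₀‖ := opNorm_comp_le _ _
    _ ≤ c * 1 := mul_le_mul hRn hP₀ (norm_nonneg _) hc
    _ = c := mul_one c
  have hBD : ‖B₁ ∘L D‖ ≤ ‖B₁‖ * c := by
    calc ‖B₁ ∘L D‖ ≤ ‖B₁‖ * ‖D‖ := opNorm_comp_le _ _
    _ ≤ ‖B₁‖ * c := mul_le_mul_of_nonneg_left hDn (norm_nonneg _)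
  have hmain : ‖μ₀ - μ₁‖ * ‖E ∘L P₀‖ ≤ ‖μ₀‖ * (‖μ₁‖ * c + ‖μ₁‖ * (‖B₁‖ * c) + c) := by
    calc ‖μ₀ - μ₁‖ * ‖E ∘L P₀‖ = ‖(μ₀ - μ₁) • (E ∘L P₀)‖ := (norm_smul _ _).symm
    _ = ‖μ₀ • (μ₁ • (R ∘L P₀) + μ₁ • (B₁ ∘L D) - D)‖ := by rw [key]
    _ ≤ ‖μ₀‖ * ‖μ₁ • (R ∘L P₀) + μ₁ • (B₁ ∘L D) - D‖ := opNorm_smul_le _ _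
    _ ≤ ‖μ₀‖ * (‖μ₁‖ * c + ‖μ₁‖ * (‖B₁‖ * c) + c) := by
        apply mul_le_mul_of_nonneg_left _ (norm_nonneg _)
        have e1 : ‖μ₁ • (R ∘L P₀)‖ ≤ ‖μ₁‖ * c :=
          (opNorm_smul_le _ _).trans (mul_le_mul_of_nonneg_left hRP (norm_nonneg _))
        have e2 : ‖μ₁ • (B₁ ∘L D)‖ ≤ ‖μ₁‖ * (‖B₁‖ * c) :=
          (opNorm_smul_le _ _).trans (mul_le_mul_of_nonneg_left hBD (norm_nonneg _))
        calc ‖μ₁ • (R ∘L P₀) + μ₁ • (B₁ ∘L D) - D‖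
            ≤ ‖μ₁ • (R ∘L P₀) + μ₁ • (B₁ ∘L D)‖ + ‖D‖ := norm_sub_le _ _
        _ ≤ (‖μ₁ • (R ∘L P₀)‖ + ‖μ₁ • (B₁ ∘L D)‖) + ‖D‖ := by
            gcongr; exact norm_add_le _ _
        _ ≤ ‖μ₁‖ * c + ‖μ₁‖ * (‖B₁‖ * c) + c := by linarith
  rw [le_div_iff₀ hEP, norm_sub_rev]
  calc ‖μ₀ - μ₁‖ * ‖E ∘L P₀‖ ≤ ‖μ₀‖ * (‖μ₁‖ * c + ‖μ₁‖ * (‖B₁‖ * c) + c) := hmain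
  _ = c * ‖μ₀‖ * (1 + ‖μ₁‖ + ‖μ₁‖ * ‖B₁‖) := by ring
end
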